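/- The set S of summable band-limited operators on H is a two-sided ideal of the *-algebra B of band-limited operators, and S is closed under taking adjoints. -/

import Mathlib

open scoped ComplexOrder

variable {H : Type*} [NormedAddCommGroup H] [InnerProductSpace ℂ H] [CompleteSpace H]

/-- `T` is band-limited (with respect to the orthogonal decomposition `H = ⊕ₙ Hₙ` given by the
projections `P n`): there is a band limit `b` with `T(Hₙ) ⊆ ⊕_{|m-n| ≤ b} Hₘ` for all `n`. -/
def BandLimited (P : ℕ → H →L[ℂ] H) (T : H →L[ℂ] H) : Prop :=
  ∃ b : ℕ, ∀ m n : ℕ, (n + b < m ∨ m + b < n) → (P m).comp (T.comp (P n)) = 0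

/-- `T` is summable: `Σₙ ‖T|_{Hₙ}‖ < ∞`. -/
def SummableRestrictions (P : ℕ → H →L[ℂ] H) (T : H →L[ℂ] H) : Prop :=
  Summable fun n => ‖T.comp (P n)‖

/-- `T` is a summable band-limited operator. -/
def SBL (P : ℕ → H →L[ℂ] H) (T : H →L[ℂ] H) : Prop :=
  BandLimited P T ∧ SummableRestrictions P T

local notation "⟪" x ", " y "⟫" => @inner ℂ _ _ x y

section Aux
variable (P : ℕ → H →L[ℂ] H)

lemma aux_norm_P_apply_le (hsa : ∀ n, IsSelfAdjoint (P n)) (hidem : ∀ n, P n * P n = P n)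
    (n : ℕ) (x : H) : ‖P n x‖ ≤ ‖x‖ := by
  rcases eq_or_lt_of_le (norm_nonneg (P n x)) with h0 | h0
  · rw [← h0]; exact norm_nonneg x
  · have hPP : P n (P n x) = P n x := by
      conv_rhs => rw [← hidem n]
      rfl
    have h1 : ⟪P n x, P n x⟫ = ⟪x, P n x⟫ := by
      calc ⟪P n x, P n x⟫ = ⟪(ContinuousLinearMap.adjoint (P n)) x, P n x⟫ := by
            rw [(hsa n).adjoint_eq]
        _ = ⟪x, P n (P n x)⟫ := ContinuousLinearMap.adjoint_inner_left _ _ _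
        _ = ⟪x, P n x⟫ := by rw [hPP]
    have h2 : ‖P n x‖ ^ 2 = RCLike.re ⟪x, P n x⟫ := by
      rw [← h1, inner_self_eq_norm_sq]
    have h3 : RCLike.re ⟪x, P n x⟫ ≤ ‖x‖ * ‖P n x‖ :=
      (RCLike.re_le_norm _).trans (norm_inner_le_norm x (P n x))
    nlinarith

lemma aux_norm_P_comp_le (hsa : ∀ n, IsSelfAdjoint (P n)) (hidem : ∀ n, P n * P n = P n)
    (n : ℕ) (A : H →L[ℂ] H) : ‖(P n).comp A‖ ≤ ‖A‖ := by
  refine ContinuousLinearMap.opNorm_le_bound _ (norm_nonneg A) fun x => ?_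
  calc ‖(P n) (A x)‖ ≤ ‖A x‖ := aux_norm_P_apply_le P hsa hidem n (A x)
    _ ≤ ‖A‖ * ‖x‖ := A.le_opNorm x

lemma aux_norm_comp_P_le (hsa : ∀ n, IsSelfAdjoint (P n)) (hidem : ∀ n, P n * P n = P n)
    (n : ℕ) (A : H →L[ℂ] H) : ‖A.comp (P n)‖ ≤ ‖A‖ := by
  refine ContinuousLinearMap.opNorm_le_bound _ (norm_nonneg A) fun x => ?_
  calc ‖A (P n x)‖ ≤ ‖A‖ * ‖P n x‖ := A.le_opNorm _
    _ ≤ ‖A‖ * ‖x‖ := by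
        exact mul_le_mul_of_nonneg_left (aux_norm_P_apply_le P hsa hidem n x) (norm_nonneg A)

lemma aux_expand_right (htotal : ∀ x : H, HasSum (fun n => P n x) x)
    (A : H →L[ℂ] H) (s : Finset ℕ) (h : ∀ m ∉ s, A.comp (P m) = 0) :
    A = ∑ m ∈ s, A.comp (P m) := by
  ext x
  have h1 : HasSum (fun m => A (P m x)) (A x) := (htotal x).mapL A
  have h2 : HasSum (fun m => A (P m x)) (∑ m ∈ s, A (P m x)) := by
    refine hasSum_sum_of_ne_finset_zero fun m hm => ?_
    have h3 : A.comp (P m) x = (0 : H →L[ℂ] H) x := by rw [h m hm]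
    simpa using h3
  rw [h1.unique h2]
  simp

lemma aux_expand_left (htotal : ∀ x : H, HasSum (fun n => P n x) x)
    (A : H →L[ℂ] H) (s : Finset ℕ) (h : ∀ m ∉ s, (P m).comp A = 0) :
    A = ∑ m ∈ s, (P m).comp A := by
  ext x
  have h1 : HasSum (fun m => P m (A x)) (A x) := htotal (A x)
  have h2 : HasSum (fun m => P m (A x)) (∑ m ∈ s, P m (A x)) := by
    refine hasSum_sum_of_ne_finset_zero fun m hm => ?_
    have h3 : (P m).comp A x = (0 : H →L[ℂ] H) x := by rw [h m hm]
    simpa using h3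
  rw [h1.unique h2]
  simp

lemma aux_mem_band {b m n : ℕ} (h : m ∉ Finset.Icc (n - b) (n + b)) :
    n + b < m ∨ m + b < n := by
  simp only [Finset.mem_Icc, not_and_or, not_le] at h
  omega

lemma aux_summable_window {a : ℕ → ℝ} (ha : Summable a) (hpos : ∀ n, 0 ≤ a n) (b : ℕ) :
    Summable (fun n => ∑ m ∈ Finset.Icc (n - b) (n + b), a m) := by
  have key : ∀ k : ℕ, Summable (fun n => a (n - b + k)) := by
    intro k
    have h1 : Summable (fun n => a (n + k)) := (summable_nat_add_iff k).2 ha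
    refine (summable_nat_add_iff (f := fun n => a (n - b + k)) b).1 ?_
    have h2 : (fun n => a (n + b - b + k)) = fun n => a (n + k) := by
      funext n; congr 1; omega
    exact h2 ▸ h1
  have hsum : Summable (fun n => ∑ k ∈ Finset.range (2 * b + 1), a (n - b + k)) :=
    summable_sum fun k _ => key k
  refine Summable.of_nonneg_of_le (fun n => Finset.sum_nonneg fun m _ => hpos m)
    (fun n => ?_) hsum
  have hsub : Finset.Icc (n - b) (n + b) ⊆
      (Finset.range (2 * b + 1)).image (fun k => n - b + k) := by
    intro m hm
    simp only [Finset.mem_Icc] at hm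
    simp only [Finset.mem_image, Finset.mem_range]
    exact ⟨m - (n - b), by omega, by omega⟩
  calc ∑ m ∈ Finset.Icc (n - b) (n + b), a m
      ≤ ∑ m ∈ (Finset.range (2 * b + 1)).image (fun k => n - b + k), a m :=
        Finset.sum_le_sum_of_subset_of_nonneg hsub fun i _ _ => hpos i
    _ = ∑ k ∈ Finset.range (2 * b + 1), a (n - b + k) := by
        refine Finset.sum_image ?_
        intro x _ y _ hxy
        simp only at hxy
        omega

end Aux


section Main
variable (P : ℕ → H →L[ℂ] H)

lemma aux_band_mul (htotal : ∀ x : H, HasSum (fun n => P n x) x)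
    {T S : H →L[ℂ] H} (hT : BandLimited P T) (hS : BandLimited P S) :
    BandLimited P (T * S) := by
  obtain ⟨bT, hbT⟩ := hT
  obtain ⟨bS, hbS⟩ := hS
  refine ⟨bT + bS, fun m n hmn => ?_⟩
  ext x
  have h1 : HasSum (fun k => ((P m).comp T) (P k ((S.comp (P n)) x)))
      (((P m).comp T) ((S.comp (P n)) x)) := (htotal _).mapL ((P m).comp T)
  have hterm : ∀ k, ((P m).comp T) (P k ((S.comp (P n)) x)) = 0 := by
    intro k
    rcases (by omega : (k + bT < m ∨ m + bT < k) ∨ (n + bS < k ∨ k + bS < n)) with h | h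
    · have h0 := hbT m k h
      calc ((P m).comp T) (P k ((S.comp (P n)) x))
          = ((P m).comp (T.comp (P k))) ((S.comp (P n)) x) := rfl
        _ = 0 := by rw [h0]; rfl
    · have h0 := hbS k n h
      have h2 : P k ((S.comp (P n)) x) = 0 := by
        have h3 := congrArg (fun A : H →L[ℂ] H => A x) h0
        simpa using h3
      rw [h2]; simp
  have h2 : HasSum (fun k => ((P m).comp T) (P k ((S.comp (P n)) x))) 0 := by
    have he : (fun k => ((P m).comp T) (P k ((S.comp (P n)) x))) = fun _ => (0 : H) :=
      funext hterm
    rw [he]; exact hasSum_zero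
  have h3 : ((P m).comp T) ((S.comp (P n)) x) = 0 := h1.unique h2
  show ((P m).comp ((T * S).comp (P n))) x = (0 : H →L[ℂ] H) x
  calc ((P m).comp ((T * S).comp (P n))) x = ((P m).comp T) ((S.comp (P n)) x) := rfl
    _ = 0 := h3
    _ = (0 : H →L[ℂ] H) x := rfl

/-- The set `S` of summable band-limited operators is a two-sided ideal of the *-algebra `B`
of band-limited operators, closed under taking adjoints. -/
theorem sbl_star_closed_two_sided_ideal (P : ℕ → H →L[ℂ] H)
    (hsa : ∀ n, IsSelfAdjoint (P n)) (hidem : ∀ n, P n * P n = P n)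
    (horth : ∀ m n, m ≠ n → P m * P n = 0)
    (htotal : ∀ x : H, HasSum (fun n => P n x) x) :
    (∀ T, SBL P T → SBL P (star T)) ∧
    (∀ T S, SBL P T → SBL P S → SBL P (T + S)) ∧
    (∀ (c : ℂ) T, SBL P T → SBL P (c • T)) ∧
    (∀ T S, BandLimited P T → SBL P S → SBL P (T * S) ∧ SBL P (S * T)) := by
  refine ⟨?_, ?_, ?_, ?_⟩
  · -- star
    rintro T ⟨⟨b, hb⟩, hsum⟩
    constructor
    · -- band-limited
      refine ⟨b, fun m n hmn => ?_⟩
      have h0 := hb n m hmn.symm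
      calc (P m).comp ((star T).comp (P n)) = star ((P n).comp (T.comp (P m))) := by
            simp only [← ContinuousLinearMap.mul_def, star_mul, (hsa m).star_eq,
              (hsa n).star_eq, mul_assoc]
        _ = 0 := by rw [h0]; exact star_zero _
    · -- summable
      have he : ∀ n, ‖(star T).comp (P n)‖ = ‖(P n).comp T‖ := by
        intro n
        calc ‖(star T).comp (P n)‖ = ‖star ((P n).comp T)‖ := by
              congr 1
              simp only [← ContinuousLinearMap.mul_def, star_mul, (hsa n).star_eq]
          _ = ‖(P n).comp T‖ := norm_star _
      have hbound : ∀ n, ‖(P n).comp T‖ ≤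
          ∑ m ∈ Finset.Icc (n - b) (n + b), ‖T.comp (P m)‖ := by
        intro n
        have hexp : (P n).comp T =
            ∑ m ∈ Finset.Icc (n - b) (n + b), ((P n).comp T).comp (P m) := by
          refine aux_expand_right P htotal _ _ fun m hm => ?_
          rw [ContinuousLinearMap.comp_assoc]
          exact hb n m (aux_mem_band hm).symm
        calc ‖(P n).comp T‖
            = ‖∑ m ∈ Finset.Icc (n - b) (n + b), ((P n).comp T).comp (P m)‖ := by
              rw [← hexp]
          _ ≤ ∑ m ∈ Finset.Icc (n - b) (n + b), ‖((P n).comp T).comp (P m)‖ :=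
              norm_sum_le _ _
          _ ≤ ∑ m ∈ Finset.Icc (n - b) (n + b), ‖T.comp (P m)‖ := by
              refine Finset.sum_le_sum fun m _ => ?_
              rw [ContinuousLinearMap.comp_assoc]
              exact aux_norm_P_comp_le P hsa hidem n _
      unfold SummableRestrictions
      refine Summable.of_nonneg_of_le (fun n => norm_nonneg _) (fun n => ?_)
        (aux_summable_window hsum (fun n => norm_nonneg _) b)
      rw [he n]
      exact hbound n
  · -- add
    rintro T S ⟨⟨bT, hbT⟩, hTs⟩ ⟨⟨bS, hbS⟩, hSs⟩
    constructor
    · refine ⟨max bT bS, fun m n hmn => ?_⟩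
      rw [ContinuousLinearMap.add_comp, ContinuousLinearMap.comp_add,
        hbT m n (by omega), hbS m n (by omega), add_zero]
    · refine Summable.of_nonneg_of_le (fun n => norm_nonneg _) (fun n => ?_) (hTs.add hSs)
      rw [ContinuousLinearMap.add_comp]
      exact norm_add_le _ _
  · -- smul
    rintro c T ⟨⟨b, hb⟩, hsum⟩
    constructor
    · refine ⟨b, fun m n hmn => ?_⟩
      rw [ContinuousLinearMap.smul_comp, ContinuousLinearMap.comp_smul, hb m n hmn,
        smul_zero]
    · have he : ∀ n, ‖(c • T).comp (P n)‖ = ‖c‖ * ‖T.comp (P n)‖ := by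
        intro n
        rw [ContinuousLinearMap.smul_comp, norm_smul]
      unfold SummableRestrictions
      simp only [he]
      exact hsum.mul_left _
  · -- products
    rintro T S hT ⟨hSb, hSs⟩
    obtain ⟨bT, hbT⟩ := hT
    refine ⟨⟨aux_band_mul P htotal ⟨bT, hbT⟩ hSb, ?_⟩,
            ⟨aux_band_mul P htotal hSb ⟨bT, hbT⟩, ?_⟩⟩
    · -- T * S summable
      refine Summable.of_nonneg_of_le (fun n => norm_nonneg _) (fun n => ?_)
        (hSs.mul_left ‖T‖)
      calc ‖(T * S).comp (P n)‖ = ‖T.comp (S.comp (P n))‖ := by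
            rw [ContinuousLinearMap.mul_def, ContinuousLinearMap.comp_assoc]
        _ ≤ ‖T‖ * ‖S.comp (P n)‖ := ContinuousLinearMap.opNorm_comp_le _ _
    · -- S * T summable
      have hbound : ∀ n, ‖(S * T).comp (P n)‖ ≤
          (∑ m ∈ Finset.Icc (n - bT) (n + bT), ‖S.comp (P m)‖) * ‖T‖ := by
        intro n
        have hexp : T.comp (P n) =
            ∑ m ∈ Finset.Icc (n - bT) (n + bT), (P m).comp (T.comp (P n)) :=
          aux_expand_left P htotal _ _ fun m hm => hbT m n (aux_mem_band hm)
        have hdist : S.comp (T.comp (P n)) =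
            ∑ m ∈ Finset.Icc (n - bT) (n + bT), S.comp ((P m).comp (T.comp (P n))) := by
          conv_lhs => rw [hexp]
          ext x
          simp [map_sum]
        calc ‖(S * T).comp (P n)‖ = ‖S.comp (T.comp (P n))‖ := by
              rw [ContinuousLinearMap.mul_def, ContinuousLinearMap.comp_assoc]
          _ = ‖∑ m ∈ Finset.Icc (n - bT) (n + bT), S.comp ((P m).comp (T.comp (P n)))‖ := by
              rw [← hdist]
          _ ≤ ∑ m ∈ Finset.Icc (n - bT) (n + bT), ‖S.comp ((P m).comp (T.comp (P n)))‖ :=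
              norm_sum_le _ _
          _ ≤ ∑ m ∈ Finset.Icc (n - bT) (n + bT), ‖S.comp (P m)‖ * ‖T‖ := by
              refine Finset.sum_le_sum fun m _ => ?_
              rw [← ContinuousLinearMap.comp_assoc]
              calc ‖(S.comp (P m)).comp (T.comp (P n))‖
                  ≤ ‖S.comp (P m)‖ * ‖T.comp (P n)‖ :=
                    ContinuousLinearMap.opNorm_comp_le _ _
                _ ≤ ‖S.comp (P m)‖ * ‖T‖ :=
                    mul_le_mul_of_nonneg_left (aux_norm_comp_P_le P hsa hidem n T)
                      (norm_nonneg _)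
          _ = (∑ m ∈ Finset.Icc (n - bT) (n + bT), ‖S.comp (P m)‖) * ‖T‖ :=
              (Finset.sum_mul _ _ _).symm
      refine Summable.of_nonneg_of_le (fun n => norm_nonneg _) hbound
        ((aux_summable_window hSs (fun n => norm_nonneg _) bT).mul_right ‖T‖)

end Main
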